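/- arXiv:2202.13280 — 2 statements merged into one kernel-verified Lean document; each statement's English description precedes it below -/
import Mathlib

section
/- Let k > 0, L > 0, α ∈ ℝ, α_n = α + 2nπ/L and β_n = √(k² − α_n²) if |α_n| ≤ k, β_n = i√(α_n² − k²) if |α_n| > k. Suppose (A_n)_{n∈ℤ} are complex numbers such that Σ_n |A_n e^{i β_n (h−σ)}|² < ∞ for some h ∈ ℝ and σ > 0. Then the series u(x₁,x₂) = Σ_n A_n e^{i α_n x₁ + i β_n x₂} converges absolutely and uniformly on the half-plane {(x₁,x₂) : x₂ ≥ h}, and u is uniformly bounded there; moreover 2·Σ_n |A_n e^{i α_n x₁ + i β_n x₂}| ≤ Σ_n |A_n e^{i β_n (h−σ)}|² + Σ_{|α_n| ≤ k} 1 + Σ_{|α_n| > k} |e^{i β_n (x₂ − h + σ)}|² for all x₂ ≥ h. -/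
open Real

/-- The Rayleigh lateral wavenumbers `α_n = α + 2nπ/L`. -/
noncomputable def alphaN (α L : ℝ) (n : ℤ) : ℝ := α + 2 * n * π / L

/-- The Rayleigh vertical wavenumbers `β_n`. -/
noncomputable def betaN (k α L : ℝ) (n : ℤ) : ℂ :=
  if |alphaN α L n| ≤ k then ((Real.sqrt (k ^ 2 - (alphaN α L n) ^ 2) : ℝ) : ℂ)
  else Complex.I * ((Real.sqrt ((alphaN α L n) ^ 2 - k ^ 2) : ℝ) : ℂ)

lemma norm_exp_case1 {k α L : ℝ} {n : ℤ} (hc : |alphaN α L n| ≤ k) (t : ℝ) :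
    ‖Complex.exp (Complex.I * betaN k α L n * (t:ℂ))‖ = 1 := by
  rw [betaN, if_pos hc, Complex.norm_exp]
  simp [Complex.mul_re]

lemma norm_exp_case2 {k α L : ℝ} {n : ℤ} (hc : ¬ |alphaN α L n| ≤ k) (t : ℝ) :
    ‖Complex.exp (Complex.I * betaN k α L n * (t:ℂ))‖
      = Real.exp (-(Real.sqrt ((alphaN α L n)^2 - k^2) * t)) := by
  rw [betaN, if_neg hc, Complex.norm_exp]
  congr 1
  have h1 : Complex.I * (Complex.I * ((Real.sqrt ((alphaN α L n)^2 - k^2) : ℝ):ℂ)) * (t:ℂ)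
      = ((-(Real.sqrt ((alphaN α L n)^2 - k^2) * t) : ℝ) : ℂ) := by
    push_cast
    rw [show ∀ z w : ℂ, Complex.I * (Complex.I * z) * w = Complex.I*Complex.I*(z*w) from
      fun z w => by ring, Complex.I_mul_I]
    ring
  rw [h1, Complex.ofReal_re]

lemma norm_split (k L α h σ : ℝ) (A : ℤ → ℂ) (n : ℤ) (x₁ x₂ : ℝ) :
    ‖A n * Complex.exp (Complex.I * ((alphaN α L n : ℝ) : ℂ) * (x₁ : ℂ)
        + Complex.I * betaN k α L n * (x₂ : ℂ))‖
    = ‖A n * Complex.exp (Complex.I * betaN k α L n * ((h - σ : ℝ) : ℂ))‖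
      * ‖Complex.exp (Complex.I * betaN k α L n * ((x₂ - h + σ : ℝ) : ℂ))‖ := by
  have key : ∀ z : ℂ, ‖Complex.exp z‖ = Real.exp z.re := fun z => by
    rw [Complex.norm_exp]
  simp only [norm_mul, key, mul_assoc, ← Real.exp_add]
  congr 2
  simp [Complex.add_re, Complex.mul_re, Complex.mul_im]
  ring

lemma abs_alphaN_lower {α L : ℝ} (hL : 0 < L) (n : ℤ) :
    2 * |(n:ℝ)| * π / L - |α| ≤ |alphaN α L n| := by
  have h1 : |2 * (n:ℝ) * π / L| = 2 * |(n:ℝ)| * π / L := by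
    rw [abs_div, abs_mul, abs_mul, abs_of_pos hL, abs_of_pos (by norm_num : (0:ℝ) < 2),
      abs_of_pos Real.pi_pos]
  have h2 : |2 * (n:ℝ) * π / L| ≤ |alphaN α L n| + |α| := by
    have h3 : (2 * (n:ℝ) * π / L) = alphaN α L n - α := by rw [alphaN]; ring
    rw [h3]
    exact abs_sub _ _
  linarith [h1 ▸ h2]

lemma nabs_le {k L α : ℝ} (hL : 0 < L) {n : ℤ} (hn : |alphaN α L n| ≤ k) :
    |(n:ℝ)| ≤ (k + |α|) * L / (2 * π) := by
  have hπ := Real.pi_pos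
  have h1 := abs_alphaN_lower (α := α) hL n
  rw [le_div_iff₀ (by positivity : (0:ℝ) < 2 * π)]
  have h4 := (div_le_iff₀ hL).mp (show 2 * |(n:ℝ)| * π / L ≤ k + |α| by linarith)
  nlinarith

lemma finite_prop (k L α : ℝ) (hL : 0 < L) : {n : ℤ | |alphaN α L n| ≤ k}.Finite := by
  set N : ℤ := ⌈(k + |α|) * L / (2 * π)⌉
  apply Set.Finite.subset (Set.finite_Icc (-N) N)
  intro n hn
  simp only [Set.mem_setOf_eq] at hn
  have h2 := (nabs_le hL hn).trans (Int.le_ceil _)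
  have h3 : |n| ≤ N := by exact_mod_cast h2
  rw [Set.mem_Icc]
  exact abs_le.mp h3

lemma summable_c1 (k L α : ℝ) (hL : 0 < L) :
    Summable (fun n : ℤ => if |alphaN α L n| ≤ k then (1:ℝ) else 0) := by
  apply summable_of_finite_support
  apply (finite_prop k L α hL).subset
  intro n hn
  simp only [Function.mem_support] at hn
  by_contra hc
  simp only [Set.mem_setOf_eq] at hc
  exact hn (if_neg hc)

lemma sqrt_lower {k a : ℝ} (hk : 0 < k) (ha : k < |a|) :
    |a| - k ≤ Real.sqrt (a^2 - k^2) := by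
  rw [show a^2 = |a|^2 from (sq_abs a).symm]
  have h2 : k^2 ≤ |a|^2 := pow_le_pow_left₀ hk.le ha.le 2
  rw [Real.le_sqrt (by linarith) (by linarith)]
  nlinarith

lemma summable_d (k L α σ : ℝ) (hk : 0 < k) (hL : 0 < L) (hσ : 0 < σ) :
    Summable (fun n : ℤ => if |alphaN α L n| ≤ k then (1:ℝ)
      else Real.exp (-(σ * Real.sqrt ((alphaN α L n)^2 - k^2)))) := by
  have hπ := Real.pi_pos
  set r : ℝ := Real.exp (-(2 * σ * π / L)) with hr
  have hr0 : 0 < r := Real.exp_pos _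
  have hr1 : r < 1 := by
    rw [hr]
    exact Real.exp_lt_one_iff.mpr (neg_lt_zero.mpr (by positivity))
  set C : ℝ := Real.exp (σ * (|α| + k)) with hC
  have hC0 : 0 < C := Real.exp_pos _
  have hgeo : Summable (fun n : ℤ => C * r ^ n.natAbs) := by
    apply Summable.mul_left
    apply Summable.of_nat_of_neg
    · simpa using summable_geometric_of_lt_one hr0.le hr1
    · simpa using summable_geometric_of_lt_one hr0.le hr1
  apply Summable.of_nonneg_of_le _ _ ((summable_c1 k L α hL).add hgeo)
  · intro n
    split
    · norm_num
    · positivity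
  · intro n
    by_cases hc : |alphaN α L n| ≤ k
    · simp only [if_pos hc]
      have : 0 ≤ C * r ^ n.natAbs := by positivity
      linarith
    · simp only [if_neg hc]
      have hlt := lt_of_not_ge hc
      have hs := sqrt_lower hk hlt
      have h1 := abs_alphaN_lower (α := α) hL n
      have h2 : -(σ * Real.sqrt ((alphaN α L n)^2 - k^2))
          ≤ σ * (|α| + k) + (n.natAbs : ℝ) * (-(2 * σ * π / L)) := by
        have h3 : (n.natAbs : ℝ) = |(n:ℝ)| := by
          rw [Nat.cast_natAbs, Int.cast_abs]
        rw [h3]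
        have h4 : 2 * |(n:ℝ)| * π / L - |α| - k ≤ Real.sqrt ((alphaN α L n)^2 - k^2) := by linarith
        have h5 : σ * (2 * |(n:ℝ)| * π / L - |α| - k) ≤ σ * Real.sqrt ((alphaN α L n)^2 - k^2) :=
          mul_le_mul_of_nonneg_left h4 hσ.le
        have h6 : |(n:ℝ)| * (-(2 * σ * π / L)) = -(σ * (2 * |(n:ℝ)| * π / L)) := by
          ring
        nlinarith [h5]
      have hfin : Real.exp (-(σ * Real.sqrt ((alphaN α L n)^2 - k^2))) ≤ C * r ^ n.natAbs := by
        calc Real.exp (-(σ * Real.sqrt ((alphaN α L n)^2 - k^2)))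
            ≤ Real.exp (σ * (|α| + k) + (n.natAbs : ℝ) * (-(2 * σ * π / L))) :=
              Real.exp_le_exp.mpr h2
          _ = C * r ^ n.natAbs := by rw [Real.exp_add, hC, hr, Real.exp_nat_mul]
      linarith

theorem rayleigh_series_uniform_bound (k L α h σ : ℝ) (hk : 0 < k) (hL : 0 < L) (hσ : 0 < σ)
    (A : ℤ → ℂ)
    (hsum : Summable (fun n : ℤ =>
      ‖A n * Complex.exp (Complex.I * betaN k α L n * ((h - σ : ℝ) : ℂ))‖ ^ 2)) :
    (∃ g : ℤ → ℝ, Summable g ∧ ∀ n : ℤ, ∀ x₁ x₂ : ℝ, h ≤ x₂ →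
      ‖A n * Complex.exp (Complex.I * ((alphaN α L n : ℝ) : ℂ) * (x₁ : ℂ)
          + Complex.I * betaN k α L n * (x₂ : ℂ))‖ ≤ g n) ∧
    (∃ M : ℝ, ∀ x₁ x₂ : ℝ, h ≤ x₂ →
      ‖∑' n : ℤ, A n * Complex.exp (Complex.I * ((alphaN α L n : ℝ) : ℂ) * (x₁ : ℂ)
          + Complex.I * betaN k α L n * (x₂ : ℂ))‖ ≤ M) ∧
    (∀ x₁ x₂ : ℝ, h ≤ x₂ →
      2 * ∑' n : ℤ, ‖A n * Complex.exp (Complex.I * ((alphaN α L n : ℝ) : ℂ) * (x₁ : ℂ)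
          + Complex.I * betaN k α L n * (x₂ : ℂ))‖
        ≤ (∑' n : ℤ, ‖A n * Complex.exp (Complex.I * betaN k α L n * ((h - σ : ℝ) : ℂ))‖ ^ 2)
          + (∑' _n : {n : ℤ // |alphaN α L n| ≤ k}, (1 : ℝ))
          + (∑' n : {n : ℤ // k < |alphaN α L n|},
              ‖Complex.exp (Complex.I * betaN k α L (n : ℤ) * ((x₂ - h + σ : ℝ) : ℂ))‖ ^ 2)) := by
  have hd_sum := summable_d k L α σ hk hL hσ
  have hc1_sum := summable_c1 k L α hL
  -- d is the uniform bound on the second factor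
  set d : ℤ → ℝ := fun n => if |alphaN α L n| ≤ k then (1:ℝ)
      else Real.exp (-(σ * Real.sqrt ((alphaN α L n)^2 - k^2))) with hd_def
  have hb_le : ∀ (n : ℤ) (x₂ : ℝ), h ≤ x₂ →
      ‖Complex.exp (Complex.I * betaN k α L n * ((x₂ - h + σ : ℝ) : ℂ))‖ ≤ d n := by
    intro n x₂ hx
    by_cases hc : |alphaN α L n| ≤ k
    · rw [norm_exp_case1 hc, hd_def]
      simp [hc]
    · rw [norm_exp_case2 hc, hd_def]
      simp only [if_neg hc]
      apply Real.exp_le_exp.mpr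
      have hs : 0 ≤ Real.sqrt ((alphaN α L n)^2 - k^2) := Real.sqrt_nonneg _
      nlinarith
  have hb_le_one : ∀ (n : ℤ) (x₂ : ℝ), h ≤ x₂ →
      ‖Complex.exp (Complex.I * betaN k α L n * ((x₂ - h + σ : ℝ) : ℂ))‖ ≤ 1 := by
    intro n x₂ hx
    by_cases hc : |alphaN α L n| ≤ k
    · rw [norm_exp_case1 hc]
    · rw [norm_exp_case2 hc]
      apply Real.exp_le_one_iff.mpr
      have hs : 0 ≤ Real.sqrt ((alphaN α L n)^2 - k^2) := Real.sqrt_nonneg _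
      nlinarith
  -- the dominating summable function
  have hg_sum : Summable (fun n : ℤ =>
      (‖A n * Complex.exp (Complex.I * betaN k α L n * ((h - σ : ℝ) : ℂ))‖ ^ 2 + d n) / 2) :=
    (hsum.add hd_sum).div_const 2
  have hterm_le : ∀ (n : ℤ) (x₁ x₂ : ℝ), h ≤ x₂ →
      ‖A n * Complex.exp (Complex.I * ((alphaN α L n : ℝ) : ℂ) * (x₁ : ℂ)
          + Complex.I * betaN k α L n * (x₂ : ℂ))‖
        ≤ (‖A n * Complex.exp (Complex.I * betaN k α L n * ((h - σ : ℝ) : ℂ))‖ ^ 2 + d n) / 2 := by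
    intro n x₁ x₂ hx
    rw [norm_split k L α h σ A n x₁ x₂]
    have h1 := hb_le n x₂ hx
    have h2 := hb_le_one n x₂ hx
    have h3 : (0:ℝ) ≤ ‖A n * Complex.exp (Complex.I * betaN k α L n * ((h - σ : ℝ) : ℂ))‖ :=
      norm_nonneg _
    have h4 : (0:ℝ) ≤ ‖Complex.exp (Complex.I * betaN k α L n * ((x₂ - h + σ : ℝ) : ℂ))‖ :=
      norm_nonneg _
    nlinarith [two_mul_le_add_sq
      (‖A n * Complex.exp (Complex.I * betaN k α L n * ((h - σ : ℝ) : ℂ))‖)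
      (‖Complex.exp (Complex.I * betaN k α L n * ((x₂ - h + σ : ℝ) : ℂ))‖)]
  refine ⟨⟨_, hg_sum, hterm_le⟩, ⟨∑' n : ℤ,
      (‖A n * Complex.exp (Complex.I * betaN k α L n * ((h - σ : ℝ) : ℂ))‖ ^ 2 + d n) / 2,
      ?_⟩, ?_⟩
  · -- uniform bound
    intro x₁ x₂ hx
    have hT : Summable (fun n : ℤ =>
        ‖A n * Complex.exp (Complex.I * ((alphaN α L n : ℝ) : ℂ) * (x₁ : ℂ)
          + Complex.I * betaN k α L n * (x₂ : ℂ))‖) :=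
      Summable.of_nonneg_of_le (fun n => norm_nonneg _) (fun n => hterm_le n x₁ x₂ hx) hg_sum
    exact (norm_tsum_le_tsum_norm hT).trans
      (Summable.tsum_le_tsum (fun n => hterm_le n x₁ x₂ hx) hT hg_sum)
  · -- the explicit inequality
    intro x₁ x₂ hx
    have hT : Summable (fun n : ℤ =>
        ‖A n * Complex.exp (Complex.I * ((alphaN α L n : ℝ) : ℂ) * (x₁ : ℂ)
          + Complex.I * betaN k α L n * (x₂ : ℂ))‖) :=
      Summable.of_nonneg_of_le (fun n => norm_nonneg _) (fun n => hterm_le n x₁ x₂ hx) hg_sum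
    have hc2_sum : Summable (fun n : ℤ => if |alphaN α L n| ≤ k then (0:ℝ)
        else ‖Complex.exp (Complex.I * betaN k α L n * ((x₂ - h + σ : ℝ) : ℂ))‖ ^ 2) := by
      apply Summable.of_nonneg_of_le _ _ hd_sum
      · intro n
        split
        · exact le_refl 0
        · positivity
      · intro n
        by_cases hc : |alphaN α L n| ≤ k
        · simp only [if_pos hc, hd_def]
          norm_num
        · simp only [if_neg hc, hd_def]
          have h1 := hb_le n x₂ hx
          have h2 := hb_le_one n x₂ hx
          have h4 : (0:ℝ) ≤ ‖Complex.exp (Complex.I * betaN k α L n * ((x₂ - h + σ : ℝ) : ℂ))‖ :=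
            norm_nonneg _
          simp only [hd_def, if_neg hc] at h1
          nlinarith
    -- rewrite the subtype sums
    have e1 : (∑' _n : {n : ℤ // |alphaN α L n| ≤ k}, (1 : ℝ))
        = ∑' n : ℤ, (if |alphaN α L n| ≤ k then (1:ℝ) else 0) := by
      refine Eq.trans (tsum_subtype {n : ℤ | |alphaN α L n| ≤ k} (fun _ => (1:ℝ))) ?_
      exact tsum_congr fun n => by
        by_cases hc : |alphaN α L n| ≤ k <;> simp [Set.indicator_apply, hc]
    have e2 : (∑' n : {n : ℤ // k < |alphaN α L n|},
          ‖Complex.exp (Complex.I * betaN k α L (n : ℤ) * ((x₂ - h + σ : ℝ) : ℂ))‖ ^ 2)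
        = ∑' n : ℤ, (if |alphaN α L n| ≤ k then (0:ℝ)
            else ‖Complex.exp (Complex.I * betaN k α L n * ((x₂ - h + σ : ℝ) : ℂ))‖ ^ 2) := by
      refine Eq.trans (tsum_subtype {n : ℤ | k < |alphaN α L n|}
        (fun n => ‖Complex.exp (Complex.I * betaN k α L n * ((x₂ - h + σ : ℝ) : ℂ))‖ ^ 2)) ?_
      refine tsum_congr fun n => ?_
      by_cases hc : |alphaN α L n| ≤ k
      · simp [Set.indicator_apply, not_lt.mpr hc, hc]
      · simp [Set.indicator_apply, lt_of_not_ge hc, hc]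
    rw [e1, e2, ← Summable.tsum_add hsum hc1_sum, ← Summable.tsum_add (hsum.add hc1_sum) hc2_sum,
      ← tsum_mul_left]
    apply Summable.tsum_le_tsum _ (hT.mul_left 2) ((hsum.add hc1_sum).add hc2_sum)
    intro n
    rw [norm_split k L α h σ A n x₁ x₂]
    have h1 := hb_le n x₂ hx
    have h3 : (0:ℝ) ≤ ‖A n * Complex.exp (Complex.I * betaN k α L n * ((h - σ : ℝ) : ℂ))‖ :=
      norm_nonneg _
    have hsq := two_mul_le_add_sq
      (‖A n * Complex.exp (Complex.I * betaN k α L n * ((h - σ : ℝ) : ℂ))‖)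
      (‖Complex.exp (Complex.I * betaN k α L n * ((x₂ - h + σ : ℝ) : ℂ))‖)
    by_cases hc : |alphaN α L n| ≤ k
    · rw [norm_exp_case1 hc] at hsq ⊢
      simp only [if_pos hc]
      linarith
    · simp only [if_neg hc]
      linarith
end

section
/- Let k > 0, θ ∈ (−π/2, π/2), L > 0, α = k sin θ, and let u be given in the half-plane U_h = {x₂ > h} by the Rayleigh-type expansion u(x) = A_ι e^{iαx₁ − iβ₀x₂} + Σ_{n∈ℤ} A_n e^{iα_n x₁ + iβ_n x₂} with β₀ = k cos θ > 0, coefficients satisfying Σ|A_n e^{iβ_n(h−σ)}|² < ∞ for some σ > 0. If u ≡ 0 in U_h, then A_ι = 0. -/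
open Real MeasureTheory Filter Topology

lemma norm_exp_I_mul (z : ℂ) (t : ℝ) :
    ‖Complex.exp (Complex.I * z * (t : ℂ))‖ = Real.exp (-(z.im * t)) := by
  rw [Complex.norm_exp]
  congr 1
  simp [Complex.mul_re, Complex.mul_im]

lemma betaN_im_nonneg (k α L : ℝ) (n : ℤ) : 0 ≤ (betaN k α L n).im := by
  unfold betaN; split <;> simp [Real.sqrt_nonneg]

lemma betaN_re_nonneg (k α L : ℝ) (n : ℤ) : 0 ≤ (betaN k α L n).re := by
  unfold betaN; split <;> simp [Real.sqrt_nonneg]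

lemma betaN_im_lb (k α L : ℝ) (hk : 0 ≤ k) (hL : 0 < L) (n : ℤ) :
    2 * π * |(n : ℝ)| / L - |α| - k ≤ (betaN k α L n).im := by
  have h2 : |(2 * (n:ℝ) * π / L)| = 2 * π * |(n:ℝ)| / L := by
    rw [abs_div, abs_of_pos hL, abs_mul, abs_mul, abs_two, abs_of_pos Real.pi_pos]; ring
  have hαn : 2 * π * |(n : ℝ)| / L - |α| ≤ |alphaN α L n| := by
    have h3 := abs_sub_abs_le_abs_sub (2 * (n:ℝ) * π / L) (-α)
    simp only [abs_neg, sub_neg_eq_add] at h3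
    rw [h2] at h3
    calc 2 * π * |(n:ℝ)| / L - |α| ≤ |2 * (n:ℝ) * π / L + α| := h3
      _ = |alphaN α L n| := by rw [alphaN]; ring_nf
  unfold betaN
  split
  · rename_i hc
    simp only [Complex.ofReal_im]
    linarith
  · rename_i hc
    push_neg at hc
    have him : (Complex.I * ((Real.sqrt ((alphaN α L n) ^ 2 - k ^ 2) : ℝ) : ℂ)).im
        = Real.sqrt ((alphaN α L n) ^ 2 - k ^ 2) := by
      simp [Complex.mul_im]
    rw [him]
    have h4 : 0 ≤ |alphaN α L n| - k := by linarith
    have h3 : |alphaN α L n| - k ≤ Real.sqrt ((alphaN α L n) ^ 2 - k ^ 2) := by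
      have := Real.sqrt_le_sqrt (show (|alphaN α L n| - k)^2 ≤ (alphaN α L n)^2 - k^2 by
        nlinarith [sq_abs (alphaN α L n)])
      rwa [Real.sqrt_sq h4] at this
    linarith

theorem total_field_vanishing_implies_no_incidence (k θ L h σ : ℝ)
    (hk : 0 < k) (hθ : θ ∈ Set.Ioo (-(π / 2)) (π / 2)) (hL : 0 < L) (hσ : 0 < σ)
    (Aι : ℂ) (A : ℤ → ℂ)
    (hsum : Summable (fun n : ℤ =>
      ‖A n * Complex.exp (Complex.I * betaN k (k * Real.sin θ) L n * ((h - σ : ℝ) : ℂ))‖ ^ 2))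
    (hzero : ∀ x₁ x₂ : ℝ, h < x₂ →
      Aι * Complex.exp (Complex.I * ((k * Real.sin θ : ℝ) : ℂ) * (x₁ : ℂ)
          - Complex.I * ((k * Real.cos θ : ℝ) : ℂ) * (x₂ : ℂ))
        + ∑' n : ℤ, A n * Complex.exp (Complex.I * ((alphaN (k * Real.sin θ) L n : ℝ) : ℂ) * (x₁ : ℂ)
            + Complex.I * betaN k (k * Real.sin θ) L n * (x₂ : ℂ)) = 0) :
    Aι = 0 := by
  obtain ⟨hθ1, hθ2⟩ := hθ
  set α := k * Real.sin θ with hαdef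
  set β₀ := k * Real.cos θ with hβ₀def
  have hcos : 0 < Real.cos θ := Real.cos_pos_of_mem_Ioo ⟨hθ1, hθ2⟩
  have hβ₀ : 0 < β₀ := mul_pos hk hcos
  set β : ℤ → ℂ := betaN k α L with hβdef
  have hβim : ∀ n, 0 ≤ (β n).im := fun n => betaN_im_nonneg k α L n
  have hβre : ∀ n, 0 ≤ (β n).re := fun n => betaN_re_nonneg k α L n
  -- the key pointwise identity
  have key : ∀ t : ℝ, h < t →
      Aι = ∑' n : ℤ, -(A n * Complex.exp (Complex.I * (β n + (β₀:ℂ)) * (t:ℂ))) := by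
    intro t ht
    have h0 := hzero 0 t ht
    simp only [Complex.ofReal_zero, mul_zero, zero_sub, zero_add] at h0
    have hsum_eq : (∑' n : ℤ, A n * Complex.exp (Complex.I * β n * (t:ℂ)))
        * Complex.exp (Complex.I * (β₀:ℂ) * (t:ℂ))
        = ∑' n : ℤ, A n * Complex.exp (Complex.I * (β n + (β₀:ℂ)) * (t:ℂ)) := by
      rw [← tsum_mul_right]
      refine tsum_congr fun n => ?_
      rw [show Complex.I * (β n + (β₀:ℂ)) * (t:ℂ)
          = Complex.I * β n * (t:ℂ) + Complex.I * (β₀:ℂ) * (t:ℂ) from by ring,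
        Complex.exp_add, mul_assoc]
    rw [tsum_neg, ← hsum_eq]
    have h1 : Aι * Complex.exp (-(Complex.I * (β₀:ℂ) * (t:ℂ)))
        = -∑' n : ℤ, A n * Complex.exp (Complex.I * β n * (t:ℂ)) := by
      linear_combination h0
    calc Aι = Aι * Complex.exp (-(Complex.I * (β₀:ℂ) * (t:ℂ)))
          * Complex.exp (Complex.I * (β₀:ℂ) * (t:ℂ)) := by
          rw [mul_assoc, ← Complex.exp_add, neg_add_cancel, Complex.exp_zero, mul_one]
      _ = -((∑' n : ℤ, A n * Complex.exp (Complex.I * β n * (t:ℂ)))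
          * Complex.exp (Complex.I * (β₀:ℂ) * (t:ℂ))) := by rw [h1]; ring
  -- summable envelope
  set bnd : ℤ → ℝ := fun n => ‖A n‖ * Real.exp (-((β n).im * h)) with hbnddef
  have hd2 : Summable (fun n : ℤ => Real.exp (-((β n).im * σ)) ^ 2) := by
    have hr0 : (0:ℝ) ≤ Real.exp (-(4*π*σ/L)) := (Real.exp_pos _).le
    have hr1 : Real.exp (-(4*π*σ/L)) < 1 := by
      rw [Real.exp_lt_one_iff]
      have : 0 < 4*π*σ/L := by positivity
      linarith
    have hgeo : Summable (fun n : ℤ =>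
        Real.exp (2*σ*(|α|+k)) * Real.exp (-(4*π*σ/L)) ^ n.natAbs) := by
      apply Summable.mul_left
      apply Summable.of_nat_of_neg
      · simpa using summable_geometric_of_lt_one hr0 hr1
      · simpa using summable_geometric_of_lt_one hr0 hr1
    apply hgeo.of_nonneg_of_le (fun n => sq_nonneg _)
    intro n
    have hlb : 2 * π * |(n:ℝ)| / L - |α| - k ≤ (β n).im :=
      betaN_im_lb k α L hk.le hL n
    have hNa : |(n:ℝ)| = (n.natAbs : ℝ) := by rw [Nat.cast_natAbs, Int.cast_abs]
    rw [hNa] at hlb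
    have e1 : Real.exp (-((β n).im * σ)) ^ 2
        = Real.exp ((2:ℕ) * -((β n).im * σ)) := by
      rw [Real.exp_nat_mul]
    have e2 : Real.exp (2*σ*(|α|+k)) * Real.exp (-(4*π*σ/L)) ^ n.natAbs
        = Real.exp (2*σ*(|α|+k) + (n.natAbs:ℝ) * -(4*π*σ/L)) := by
      rw [Real.exp_add, Real.exp_nat_mul]
    rw [e1, e2]
    apply Real.exp_le_exp.mpr
    push_cast
    have h2 : (2*σ) * (2 * π * ((n.natAbs:ℝ)) / L - |α| - k) ≤ (2*σ) * (β n).im :=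
      mul_le_mul_of_nonneg_left hlb (by positivity)
    have h3 : (2*σ) * (2 * π * ((n.natAbs:ℝ)) / L) = (n.natAbs:ℝ) * (4*π*σ/L) := by ring
    nlinarith [h2, h3]
  have hbnd_eq : ∀ n : ℤ, bnd n
      = ‖A n * Complex.exp (Complex.I * β n * ((h - σ : ℝ):ℂ))‖
        * Real.exp (-((β n).im * σ)) := by
    intro n
    rw [norm_mul, norm_exp_I_mul, hbnddef]
    simp only
    rw [mul_assoc, ← Real.exp_add]
    congr 2
    ring
  have hsummable_bnd : Summable bnd := by
    apply Summable.of_nonneg_of_le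
      (fun n => by rw [hbnd_eq]; positivity)
      (fun n => ?_) ((hsum.add hd2).div_const 2)
    rw [hbnd_eq]
    nlinarith [sq_nonneg (‖A n * Complex.exp (Complex.I * β n * ((h - σ : ℝ):ℂ))‖
      - Real.exp (-((β n).im * σ)))]
  -- basic facts about the combined exponent
  have contF : ∀ c : ℂ, Continuous fun t : ℝ => Complex.exp (c * (t:ℂ)) :=
    fun c => Complex.continuous_exp.comp (continuous_const.mul Complex.continuous_ofReal)
  have habs : ∀ n : ℤ, β₀ ≤ ‖β n + (β₀:ℂ)‖ := by
    intro n
    have h1 : β₀ ≤ (β n + (β₀:ℂ)).re := by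
      simp only [Complex.add_re, Complex.ofReal_re]
      linarith [hβre n]
    exact le_trans h1 (le_trans (le_abs_self _) (Complex.abs_re_le_norm _))
  have hne : ∀ n : ℤ, Complex.I * (β n + (β₀:ℂ)) ≠ 0 := by
    intro n
    refine mul_ne_zero Complex.I_ne_zero fun h0 => ?_
    have h2 := habs n
    rw [h0] at h2
    simp only [norm_zero] at h2
    linarith
  have him : ∀ n : ℤ, (β n + (β₀:ℂ)).im = (β n).im := by
    intro n; simp
  have hint : ∀ (n : ℤ) (H : ℝ), IntegrableOn
      (fun t : ℝ => A n * Complex.exp (Complex.I * (β n + (β₀:ℂ)) * (t:ℂ)))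
      (Set.Ioc H (2*H)) :=
    fun n H => (continuous_const.mul (contF (Complex.I * (β n + (β₀:ℂ))))).integrableOn_Ioc
  have hptw : ∀ (n : ℤ) (t : ℝ), h ≤ t →
      ‖A n * Complex.exp (Complex.I * (β n + (β₀:ℂ)) * (t:ℂ))‖ ≤ bnd n := by
    intro n t ht
    rw [norm_mul, norm_exp_I_mul, him n, hbnddef]
    simp only
    have h1 : -((β n).im * t) ≤ -((β n).im * h) := by nlinarith [hβim n]
    exact mul_le_mul_of_nonneg_left (Real.exp_le_exp.mpr h1) (norm_nonneg _)
  have hIbound : ∀ (n : ℤ) (H : ℝ), h < H → 1 ≤ H →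
      (∫ t in Set.Ioc H (2*H),
        ‖A n * Complex.exp (Complex.I * (β n + (β₀:ℂ)) * (t:ℂ))‖) ≤ bnd n * H := by
    intro n H hH1 hH2
    have hH0 : 0 < H := lt_of_lt_of_le one_pos hH2
    have hle : (∫ t in Set.Ioc H (2*H),
        ‖A n * Complex.exp (Complex.I * (β n + (β₀:ℂ)) * (t:ℂ))‖)
        ≤ ∫ _t in Set.Ioc H (2*H), bnd n := by
      refine setIntegral_mono_on ((hint n H).norm) ?_ measurableSet_Ioc ?_
      · exact integrableOn_const (by rw [Real.volume_Ioc]; exact ENNReal.ofReal_ne_top)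
      · intro t ht
        exact hptw n t (le_of_lt (lt_of_lt_of_le hH1 ht.1.le))
    rw [setIntegral_const, measureReal_def, Real.volume_Ioc, ENNReal.toReal_ofReal (by linarith)] at hle
    have h7 : (2*H - H) • bnd n = bnd n * H := by rw [smul_eq_mul]; ring
    linarith [hle, h7.le, h7.ge]
  -- the closed form of the mode integrals
  have hclosed : ∀ (n : ℤ) (H : ℝ), 0 < H →
      (∫ t in Set.Ioc H (2*H), A n * Complex.exp (Complex.I * (β n + (β₀:ℂ)) * (t:ℂ)))
      = A n * ((Complex.exp (Complex.I * (β n + (β₀:ℂ)) * ((2*H:ℝ):ℂ))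
          - Complex.exp (Complex.I * (β n + (β₀:ℂ)) * ((H:ℝ):ℂ)))
          / (Complex.I * (β n + (β₀:ℂ)))) := by
    intro n H hH
    rw [← intervalIntegral.integral_of_le (by linarith : H ≤ 2*H),
      intervalIntegral.integral_const_mul, integral_exp_mul_complex (hne n)]
  -- per-H identity
  have main : ∀ H : ℝ, h < H → 1 ≤ H →
      ∑' n : ℤ, (((H:ℝ):ℂ))⁻¹ * -(∫ t in Set.Ioc H (2*H),
        A n * Complex.exp (Complex.I * (β n + (β₀:ℂ)) * (t:ℂ))) = Aι := by
    intro H hH1 hH2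
    have hH0 : 0 < H := lt_of_lt_of_le one_pos hH2
    have hs := hasSum_integral_of_summable_integral_norm
      (μ := volume.restrict (Set.Ioc H (2*H)))
      (F := fun (n : ℤ) (t : ℝ) =>
        -(A n * Complex.exp (Complex.I * (β n + (β₀:ℂ)) * (t:ℂ))))
      (fun n => (hint n H).neg) (by
        apply Summable.of_nonneg_of_le (fun n => integral_nonneg fun t => norm_nonneg _)
          (fun n => ?_) (hsummable_bnd.mul_right H)
        simp only [norm_neg]
        exact hIbound n H hH1 hH2)
    have hval : (∫ t in Set.Ioc H (2*H),
        ∑' n : ℤ, -(A n * Complex.exp (Complex.I * (β n + (β₀:ℂ)) * (t:ℂ)))) = (H : ℝ) • Aι := by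
      rw [setIntegral_congr_fun measurableSet_Ioc
        (fun t ht => (key t (lt_trans hH1 ht.1)).symm)]
      rw [setIntegral_const, measureReal_def, Real.volume_Ioc, ENNReal.toReal_ofReal (by linarith),
        show 2*H - H = H from by ring]
    have htsum := hs.tsum_eq
    rw [hval] at htsum
    rw [tsum_mul_left]
    have h5 : (∑' n : ℤ, -(∫ t in Set.Ioc H (2*H),
        A n * Complex.exp (Complex.I * (β n + (β₀:ℂ)) * (t:ℂ)))) = (H:ℝ) • Aι := by
      rw [← htsum]
      exact tsum_congr fun n => (integral_neg _).symm
    rw [h5, Complex.real_smul, ← mul_assoc,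
      inv_mul_cancel₀ (Complex.ofReal_ne_zero.mpr hH0.ne'), one_mul]
  -- the sequence of heights
  set Hs : ℕ → ℝ := fun m => |h| + 1 + m with hHsdef
  have hHs1 : ∀ m : ℕ, h < Hs m := by
    intro m
    have h1 := le_abs_self h
    have h2 : (0:ℝ) ≤ (m:ℝ) := Nat.cast_nonneg m
    simp only [hHsdef]
    linarith
  have hHs2 : ∀ m : ℕ, 1 ≤ Hs m := by
    intro m
    have h1 := abs_nonneg h
    have h2 : (0:ℝ) ≤ (m:ℝ) := Nat.cast_nonneg m
    simp only [hHsdef]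
    linarith
  have hHs0 : ∀ m : ℕ, 0 < Hs m := fun m => lt_of_lt_of_le one_pos (hHs2 m)
  have hHtop : Tendsto Hs atTop atTop := by
    simp only [hHsdef]
    exact tendsto_atTop_add_const_left _ _ tendsto_natCast_atTop_atTop
  -- pointwise convergence to zero
  have hab : ∀ n : ℤ, Tendsto (fun m : ℕ =>
      ((Hs m : ℝ):ℂ)⁻¹ * -(∫ t in Set.Ioc (Hs m) (2*Hs m),
        A n * Complex.exp (Complex.I * (β n + (β₀:ℂ)) * (t:ℂ)))) atTop (𝓝 0) := by
    intro n
    have hnb : ∀ m : ℕ, ‖((Hs m : ℝ):ℂ)⁻¹ * -(∫ t in Set.Ioc (Hs m) (2*Hs m),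
        A n * Complex.exp (Complex.I * (β n + (β₀:ℂ)) * (t:ℂ)))‖
        ≤ (‖A n‖ * (2 / β₀)) * (Hs m)⁻¹ := by
      intro m
      rw [norm_mul, norm_neg, hclosed n (Hs m) (hHs0 m), norm_inv, Complex.norm_real,
        Real.norm_eq_abs, abs_of_pos (hHs0 m), norm_mul, norm_div]
      have hd1 : ‖Complex.exp (Complex.I * (β n + (β₀:ℂ)) * ((2*Hs m:ℝ):ℂ))‖ ≤ 1 := by
        rw [norm_exp_I_mul, him n]
        rw [Real.exp_le_one_iff]
        nlinarith [hβim n, hHs0 m]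
      have hd2 : ‖Complex.exp (Complex.I * (β n + (β₀:ℂ)) * ((Hs m:ℝ):ℂ))‖ ≤ 1 := by
        rw [norm_exp_I_mul, him n]
        rw [Real.exp_le_one_iff]
        nlinarith [hβim n, hHs0 m]
      have hdiff : ‖Complex.exp (Complex.I * (β n + (β₀:ℂ)) * ((2*Hs m:ℝ):ℂ))
          - Complex.exp (Complex.I * (β n + (β₀:ℂ)) * ((Hs m:ℝ):ℂ))‖ ≤ 2 := by
        calc _ ≤ _ := norm_sub_le _ _
          _ ≤ 2 := by linarith
      have hden : β₀ ≤ ‖Complex.I * (β n + (β₀:ℂ))‖ := by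
        rw [norm_mul, Complex.norm_I, one_mul]
        exact habs n
      rw [mul_comm ((Hs m)⁻¹)]
      gcongr

    refine squeeze_zero_norm hnb ?_
    have hinv : Tendsto (fun m : ℕ => (Hs m)⁻¹) atTop (𝓝 0) := hHtop.inv_tendsto_atTop
    simpa using hinv.const_mul (‖A n‖ * (2 / β₀))
  -- uniform bound
  have hbound : ∀ᶠ m : ℕ in atTop, ∀ n : ℤ,
      ‖((Hs m : ℝ):ℂ)⁻¹ * -(∫ t in Set.Ioc (Hs m) (2*Hs m),
        A n * Complex.exp (Complex.I * (β n + (β₀:ℂ)) * (t:ℂ)))‖ ≤ bnd n := by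
    refine Filter.Eventually.of_forall fun m n => ?_
    rw [norm_mul, norm_neg, norm_inv, Complex.norm_real, Real.norm_eq_abs,
      abs_of_pos (hHs0 m)]
    have h6 : ‖∫ t in Set.Ioc (Hs m) (2*Hs m),
        A n * Complex.exp (Complex.I * (β n + (β₀:ℂ)) * (t:ℂ))‖ ≤ bnd n * Hs m :=
      le_trans (norm_integral_le_integral_norm _) (hIbound n (Hs m) (hHs1 m) (hHs2 m))
    calc (Hs m)⁻¹ * ‖∫ t in Set.Ioc (Hs m) (2*Hs m),
        A n * Complex.exp (Complex.I * (β n + (β₀:ℂ)) * (t:ℂ))‖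
        ≤ (Hs m)⁻¹ * (bnd n * Hs m) :=
          mul_le_mul_of_nonneg_left h6 (inv_nonneg.mpr (hHs0 m).le)
      _ = bnd n := by rw [mul_comm, mul_assoc, mul_inv_cancel₀ (hHs0 m).ne', mul_one]
  have hlim := tendsto_tsum_of_dominated_convergence (𝓕 := atTop)
    (f := fun (m : ℕ) (n : ℤ) => ((Hs m : ℝ):ℂ)⁻¹ * -(∫ t in Set.Ioc (Hs m) (2*Hs m),
      A n * Complex.exp (Complex.I * (β n + (β₀:ℂ)) * (t:ℂ))))
    (g := fun _ => (0:ℂ)) hsummable_bnd hab hbound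
  simp only [tsum_zero] at hlim
  have hconst : ∀ m : ℕ, (∑' n : ℤ, ((Hs m : ℝ):ℂ)⁻¹ * -(∫ t in Set.Ioc (Hs m) (2*Hs m),
      A n * Complex.exp (Complex.I * (β n + (β₀:ℂ)) * (t:ℂ)))) = Aι :=
    fun m => main (Hs m) (hHs1 m) (hHs2 m)
  exact tendsto_nhds_unique tendsto_const_nhds (hlim.congr hconst)
end
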